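/- Suppose M1 is positive definite, let W = M1⁻¹·B2 and S = Wᵀ·M1·W = [[x, a, b], [a, y, t], [b, t, z]], and suppose b ≠ y. Then the sequence β^{(3)} admits a 4-atomic representing measure. -/

import Mathlib

open Matrix

/-- The moment matrix `M(1)` of a cubic moment sequence. -/
def M1 (β00 β10 β01 β20 β11 β02 : ℝ) : Matrix (Fin 3) (Fin 3) ℝ :=
  !![β00, β10, β01; β10, β20, β11; β01, β11, β02]

/-- The block `B(2)` of a cubic moment sequence. -/
def B2 (β20 β11 β02 β30 β21 β12 β03 : ℝ) : Matrix (Fin 3) (Fin 3) ℝ :=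
  !![β20, β11, β02; β30, β21, β12; β21, β12, β03]

/-- The cubic moment sequence `β^{(3)}` as a function of the indices `(i, j)`,
`i + j ≤ 3`. -/
def cubicMoment (β00 β10 β01 β20 β11 β02 β30 β21 β12 β03 : ℝ) : ℕ → ℕ → ℝ
  | 0, 0 => β00
  | 1, 0 => β10
  | 0, 1 => β01
  | 2, 0 => β20
  | 1, 1 => β11
  | 0, 2 => β02
  | 3, 0 => β30
  | 2, 1 => β21
  | 1, 2 => β12
  | 0, 3 => β03
  | _, _ => 0

/-- `pt, ρ` is an `r`-atomic representing measure of the cubic sequence `β^{(3)}`. -/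
def IsAtomicRep (β00 β10 β01 β20 β11 β02 β30 β21 β12 β03 : ℝ) (r : ℕ)
    (pt : Fin r → ℝ × ℝ) (ρ : Fin r → ℝ) : Prop :=
  Function.Injective pt ∧ (∀ k, 0 < ρ k) ∧
    ∀ i j : ℕ, i + j ≤ 3 →
      cubicMoment β00 β10 β01 β20 β11 β02 β30 β21 β12 β03 i j =
        ∑ k, ρ k * (pt k).1 ^ i * (pt k).2 ^ j

set_option maxHeartbeats 4000000

lemma transfer (b00 b10 b01 b20 b11 b02 b30 b21 b12 b03 : ℝ)
    (B00 B10 B01 B20 B11 B02 B30 B21 B12 B03 : ℝ)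
    (e f g h k l c : ℝ) (pt : Fin 4 → ℝ × ℝ) (ρ : Fin 4 → ℝ)
    (hrep : IsAtomicRep b00 b10 b01 b20 b11 b02 b30 b21 b12 b03 4 pt ρ)
    (hc : 0 < c) (hdet : e*k - f*h ≠ 0)
    (H00 : B00 = c*b00)
    (H10 : B10 = c*(e*b10 + f*b01 + g*b00))
    (H01 : B01 = c*(h*b10 + k*b01 + l*b00))
    (H20 : B20 = c*(e^2*b20 + 2*e*f*b11 + f^2*b02 + 2*e*g*b10 + 2*f*g*b01 + g^2*b00))
    (H11 : B11 = c*(e*h*b20 + (e*k + f*h)*b11 + f*k*b02 + (e*l + g*h)*b10 + (f*l + g*k)*b01 + g*l*b00))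
    (H02 : B02 = c*(h^2*b20 + 2*h*k*b11 + k^2*b02 + 2*h*l*b10 + 2*k*l*b01 + l^2*b00))
    (H30 : B30 = c*(e^3*b30 + 3*e^2*f*b21 + 3*e*f^2*b12 + f^3*b03 + 3*e^2*g*b20 + 6*e*f*g*b11 + 3*f^2*g*b02 + 3*e*g^2*b10 + 3*f*g^2*b01 + g^3*b00))
    (H21 : B21 = c*(e^2*h*b30 + (e^2*k + 2*e*f*h)*b21 + (2*e*f*k + f^2*h)*b12 + f^2*k*b03 + (2*e*g*h + e^2*l)*b20 + (2*e*g*k + 2*f*g*h + 2*e*f*l)*b11 + (2*f*g*k + f^2*l)*b02 + (g^2*h + 2*e*g*l)*b10 + (g^2*k + 2*f*g*l)*b01 + g^2*l*b00))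
    (H12 : B12 = c*(e*h^2*b30 + (2*e*h*k + f*h^2)*b21 + (e*k^2 + 2*f*h*k)*b12 + f*k^2*b03 + (h^2*g + 2*e*h*l)*b20 + (2*h*k*g + 2*f*h*l + 2*e*k*l)*b11 + (k^2*g + 2*f*k*l)*b02 + (2*h*l*g + e*l^2)*b10 + (2*k*l*g + f*l^2)*b01 + g*l^2*b00))
    (H03 : B03 = c*(h^3*b30 + 3*h^2*k*b21 + 3*h*k^2*b12 + k^3*b03 + 3*h^2*l*b20 + 6*h*k*l*b11 + 3*k^2*l*b02 + 3*h*l^2*b10 + 3*k*l^2*b01 + l^3*b00)) :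
    IsAtomicRep B00 B10 B01 B20 B11 B02 B30 B21 B12 B03 4
      (fun n => (e*(pt n).1 + f*(pt n).2 + g, h*(pt n).1 + k*(pt n).2 + l))
      (fun n => c * ρ n) := by
  obtain ⟨hinj, hpos, hmom⟩ := hrep
  have h00 := hmom 0 0 (by norm_num); have h10 := hmom 1 0 (by norm_num)
  have h01 := hmom 0 1 (by norm_num); have h20 := hmom 2 0 (by norm_num)
  have h11 := hmom 1 1 (by norm_num); have h02 := hmom 0 2 (by norm_num)
  have h30 := hmom 3 0 (by norm_num); have h21 := hmom 2 1 (by norm_num)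
  have h12 := hmom 1 2 (by norm_num); have h03 := hmom 0 3 (by norm_num)
  simp only [cubicMoment, Fin.sum_univ_four] at h00 h10 h01 h20 h11 h02 h30 h21 h12 h03
  refine ⟨?_, fun n => mul_pos hc (hpos n), ?_⟩
  · intro m n hmn
    simp only [Prod.mk.injEq] at hmn
    obtain ⟨h1, h2⟩ := hmn
    apply hinj
    have hx : (e*k - f*h) * ((pt m).1 - (pt n).1) = 0 := by linear_combination k*h1 - f*h2
    have hy : (e*k - f*h) * ((pt m).2 - (pt n).2) = 0 := by linear_combination e*h2 - h*h1
    have hx' := (mul_eq_zero.1 hx).resolve_left hdet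
    have hy' := (mul_eq_zero.1 hy).resolve_left hdet
    have : (pt m).1 = (pt n).1 := by linarith [sub_eq_zero.1 hx']
    have : (pt m).2 = (pt n).2 := by
      have := sub_eq_zero.1 hy'; linarith
    ext
    · exact sub_eq_zero.1 hx'
    · exact sub_eq_zero.1 hy'
  · intro i j hij
    have hi : i ≤ 3 := by omega
    have hj : j ≤ 3 := by omega
    interval_cases i <;> interval_cases j <;> simp only [cubicMoment, Fin.sum_univ_four] <;>
      first
      | omega
      | (exact absurd hij (by omega))
      | (rw [H00]; linear_combination c*h00)
      | (rw [H10]; linear_combination c*e*h10 + c*f*h01 + c*g*h00)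
      | (rw [H01]; linear_combination c*h*h10 + c*k*h01 + c*l*h00)
      | (rw [H20]; linear_combination c*e^2*h20 + 2*c*e*f*h11 + c*f^2*h02 + 2*c*e*g*h10 + 2*c*f*g*h01 + c*g^2*h00)
      | (rw [H11]; linear_combination c*e*h*h20 + c*(e*k+f*h)*h11 + c*f*k*h02 + c*(e*l+g*h)*h10 + c*(f*l+g*k)*h01 + c*g*l*h00)
      | (rw [H02]; linear_combination c*h^2*h20 + 2*c*h*k*h11 + c*k^2*h02 + 2*c*h*l*h10 + 2*c*k*l*h01 + c*l^2*h00)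
      | (rw [H30]; linear_combination c*e^3*h30 + 3*c*e^2*f*h21 + 3*c*e*f^2*h12 + c*f^3*h03 + 3*c*e^2*g*h20 + 6*c*e*f*g*h11 + 3*c*f^2*g*h02 + 3*c*e*g^2*h10 + 3*c*f*g^2*h01 + c*g^3*h00)
      | (rw [H21]; linear_combination c*e^2*h*h30 + c*(e^2*k+2*e*f*h)*h21 + c*(2*e*f*k+f^2*h)*h12 + c*f^2*k*h03 + c*(2*e*g*h+e^2*l)*h20 + c*(2*e*g*k+2*f*g*h+2*e*f*l)*h11 + c*(2*f*g*k+f^2*l)*h02 + c*(g^2*h+2*e*g*l)*h10 + c*(g^2*k+2*f*g*l)*h01 + c*g^2*l*h00)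
      | (rw [H12]; linear_combination c*e*h^2*h30 + c*(2*e*h*k+f*h^2)*h21 + c*(e*k^2+2*f*h*k)*h12 + c*f*k^2*h03 + c*(h^2*g+2*e*h*l)*h20 + c*(2*h*k*g+2*f*h*l+2*e*k*l)*h11 + c*(k^2*g+2*f*k*l)*h02 + c*(2*h*l*g+e*l^2)*h10 + c*(2*k*l*g+f*l^2)*h01 + c*g*l^2*h00)
      | (rw [H03]; linear_combination c*h^3*h30 + 3*c*h^2*k*h21 + 3*c*h*k^2*h12 + c*k^3*h03 + 3*c*h^2*l*h20 + 6*c*h*k*l*h11 + 3*c*k^2*l*h02 + 3*c*h*l^2*h10 + 3*c*k*l^2*h01 + c*l^3*h00)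

lemma twoAtom (m0 m1 m2 m3 : ℝ) (h0 : 0 < m0) (hd : 0 < m0*m2 - m1^2) :
    ∃ u1 u2 τ1 τ2 : ℝ, u1 ≠ u2 ∧ 0 < τ1 ∧ 0 < τ2 ∧
      u1*u2*(m0*m2 - m1^2) = m1*m3 - m2^2 ∧
      τ1+τ2 = m0 ∧ τ1*u1+τ2*u2 = m1 ∧ τ1*u1^2+τ2*u2^2 = m2 ∧ τ1*u1^3+τ2*u2^3 = m3 := by
  have hdne : m0*m2 - m1^2 ≠ 0 := ne_of_gt hd
  have h0ne : m0 ≠ 0 := ne_of_gt h0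
  obtain ⟨aa, haa⟩ : ∃ x:ℝ, x = (m0*m3 - m1*m2)/(m0*m2 - m1^2) := ⟨_, rfl⟩
  obtain ⟨bb, hbb⟩ : ∃ x:ℝ, x = (m2^2 - m1*m3)/(m0*m2 - m1^2) := ⟨_, rfl⟩
  have heq1 : aa*m1 + bb*m0 = m2 := by rw [haa, hbb]; field_simp; ring
  have heq2 : aa*m2 + bb*m1 = m3 := by rw [haa, hbb]; field_simp; ring
  have key : m0^2*(aa^2+4*bb) = (aa*m0 - 2*m1)^2 + 4*(m0*m2 - m1^2) := by
    linear_combination 4*m0*heq1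
  have hdu : 0 < aa^2 + 4*bb := by nlinarith [sq_nonneg (aa*m0 - 2*m1), sq_nonneg m0]
  obtain ⟨su, hsu, hsup⟩ : ∃ x:ℝ, x^2 = aa^2+4*bb ∧ 0 < x :=
    ⟨Real.sqrt (aa^2+4*bb), Real.sq_sqrt hdu.le, Real.sqrt_pos.2 hdu⟩
  obtain ⟨u1, hu1⟩ : ∃ x:ℝ, x = (aa+su)/2 := ⟨_, rfl⟩
  obtain ⟨u2, hu2⟩ : ∃ x:ℝ, x = (aa-su)/2 := ⟨_, rfl⟩
  have hplus : u1 + u2 = aa := by rw [hu1, hu2]; ring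
  have huv : u1*u2 = -bb := by rw [hu1, hu2]; linear_combination -hsu/4
  have h12 : u1 - u2 = su := by rw [hu1, hu2]; ring
  have hd12 : 0 < u1 - u2 := h12 ▸ hsup
  have hd12ne : u1 - u2 ≠ 0 := ne_of_gt hd12
  have heq1' : m2 = (u1+u2)*m1 - u1*u2*m0 := by
    rw [hplus, huv]; linear_combination -heq1
  have heq2' : m3 = (u1+u2)*m2 - u1*u2*m1 := by
    rw [hplus, huv]; linear_combination -heq2
  have hstep1 : (u1-u2)*(m1 - m0*u2) = m2 - 2*u2*m1 + u2^2*m0 := by linear_combination -heq1'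
  have hstep2 : (u1-u2)*(m0*u1 - m1) = m2 - 2*u1*m1 + u1^2*m0 := by linear_combination -heq1'
  have hp1 : 0 < m2 - 2*u2*m1 + u2^2*m0 := by nlinarith [sq_nonneg (u2*m0 - m1)]
  have hp2 : 0 < m2 - 2*u1*m1 + u1^2*m0 := by nlinarith [sq_nonneg (u1*m0 - m1)]
  have hn1 : 0 < m1 - m0*u2 := by nlinarith
  have hn2 : 0 < m0*u1 - m1 := by nlinarith
  refine ⟨u1, u2, (m1 - m0*u2)/(u1-u2), (m0*u1 - m1)/(u1-u2),
    fun hcon => hd12ne (by rw [hcon]; ring), div_pos hn1 hd12, div_pos hn2 hd12, ?_, ?_, ?_, ?_, ?_⟩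
  · rw [huv, hbb, neg_mul, div_mul_cancel₀ _ hdne]; ring
  · field_simp; ring
  · field_simp; ring
  · field_simp; linear_combination -(u1-u2)*heq1'
  · field_simp; linear_combination -(u1-u2)*heq2' - (u1-u2)*(u1+u2)*heq1'

lemma core' (A B p r s : ℝ) (hA : 0 < A) (hB : 0 < B) :
    ∃ (pt : Fin 4 → ℝ × ℝ) (ρ : Fin 4 → ℝ),
      IsAtomicRep 1 0 0 A 0 B p 0 r s 4 pt ρ := by
  have hBne : B ≠ 0 := ne_of_gt hB
  obtain ⟨α, hα⟩ : ∃ x:ℝ, x = r/B := ⟨_, rfl⟩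
  have hden : 0 < A + α^2 := by positivity
  have hdenne : A + α^2 ≠ 0 := ne_of_gt hden
  obtain ⟨w, hw⟩ : ∃ x:ℝ, x = A/(2*(A+α^2)) := ⟨_, rfl⟩
  have hw0 : 0 < w := by rw [hw]; positivity
  have hwA : w*(A+α^2) = A/2 := by rw [hw]; field_simp
  have hw1 : w < 1 := by nlinarith [sq_nonneg α]
  have hm0 : 0 < 1 - w := by linarith
  have hΔu : 0 < (1-w)*(A - w*α^2) - (-(w*α))^2 := by
    have : (1-w)*(A - w*α^2) - (-(w*α))^2 = A - w*(A+α^2) := by ring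
    rw [this, hwA]; linarith
  obtain ⟨u1, u2, τ1, τ2, hu12, hτ1, hτ2, _, hT0, hT1, hT2, hT3⟩ :=
    twoAtom (1-w) (-(w*α)) (A - w*α^2) (p - w*α^3) hm0 hΔu
  have hΔv : 0 < w*B - 0^2 := by nlinarith
  obtain ⟨v1, v2, σ1, σ2, hv12, hσ1, hσ2, hvv, hS0, hS1, hS2, hS3⟩ :=
    twoAtom w 0 B s hw0 hΔv
  have hvprod : v1*v2 < 0 := by
    have h1 : v1*v2*(w*B - 0^2) = 0*s - B^2 := hvv
    nlinarith [sq_nonneg B]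
  have hv1ne : v1 ≠ 0 := by intro h; rw [h] at hvprod; simp at hvprod
  have hv2ne : v2 ≠ 0 := by intro h; rw [h] at hvprod; simp at hvprod
  have hαB : α*B = r := by rw [hα]; field_simp
  refine ⟨![(u1,0),(u2,0),(α,v1),(α,v2)], ![τ1,τ2,σ1,σ2], ?_, ?_, ?_⟩
  · -- injectivity
    intro m n hmn
    fin_cases m <;> fin_cases n <;>
      simp_all [Prod.ext_iff] <;> first | rfl | (exfalso; try exact hu12 hmn.1) <;> simp_all
  · intro k; fin_cases k <;> simpa
  · intro i j hij
    have hi : i ≤ 3 := by omega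
    have hj : j ≤ 3 := by omega
    interval_cases i <;> interval_cases j <;>
        simp only [cubicMoment, Fin.sum_univ_four, Matrix.cons_val_zero, Matrix.cons_val_one,
          Matrix.head_cons, Matrix.cons_val_two, Matrix.tail_cons, Matrix.cons_val_three] <;>
      first
      | (exact absurd hij (by omega))
      | (linear_combination -hT0 - hS0)
      | (linear_combination -hT1 - α*hS0)
      | (linear_combination -hS1)
      | (linear_combination -hT2 - α^2*hS0)
      | (linear_combination -α*hS1)
      | (linear_combination -hS2)
      | (linear_combination -hT3 - α^3*hS0)
      | (linear_combination -α^2*hS1)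
      | (linear_combination -α*hS2 - hαB)
      | (linear_combination -hS3)

lemma rot' (A B p q r s : ℝ) (hA : 0 < A) (hB : 0 < B) :
    ∃ (pt : Fin 4 → ℝ × ℝ) (ρ : Fin 4 → ℝ),
      IsAtomicRep 1 0 0 A 0 B p q r s 4 pt ρ := by
  by_cases hr : r = 0
  · -- swap coordinates
    obtain ⟨pt, ρ, hrep⟩ := core' B A s q p hB hA
    exact ⟨_, _, transfer 1 0 0 B 0 A s 0 q p 1 0 0 A 0 B p q r s
      0 1 0 1 0 0 1 pt ρ hrep one_pos (by norm_num)
      (by norm_num) (by ring) (by ring) (by ring) (by ring) (by ring)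
      (by ring) (by ring) (by rw [hr]; ring) (by ring)⟩
  · -- r ≠ 0 : find a root of the quintic
    have hBne : B ≠ 0 := ne_of_gt hB
    have hd : r*B ≠ 0 := mul_ne_zero hr hBne
    obtain ⟨e4, he4⟩ : ∃ x:ℝ, x = (s*A - 2*q*B)/(r*B) := ⟨_, rfl⟩
    obtain ⟨e3, he3⟩ : ∃ x:ℝ, x = (p*B - 2*r*A + r*B)/(r*B) := ⟨_, rfl⟩
    obtain ⟨e2, he2⟩ : ∃ x:ℝ, x = (q*A - 2*q*B + s*A)/(r*B) := ⟨_, rfl⟩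
    obtain ⟨e1, he1⟩ : ∃ x:ℝ, x = (p*B - 2*r*A)/(r*B) := ⟨_, rfl⟩
    obtain ⟨e0, he0⟩ : ∃ x:ℝ, x = (q*A)/(r*B) := ⟨_, rfl⟩
    obtain ⟨M, hM⟩ : ∃ x:ℝ, x = 1 + |e4|+|e3|+|e2|+|e1|+|e0| := ⟨_, rfl⟩
    have hM1 : 1 ≤ M := by
      rw [hM]; have := abs_nonneg e4; have := abs_nonneg e3; have := abs_nonneg e2
      have := abs_nonneg e1; have := abs_nonneg e0; linarith
    have hM0 : 0 ≤ M := by linarith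
    have hpow : ∀ i:ℕ, i ≤ 4 → M^i ≤ M^4 := fun i hi => pow_le_pow_right₀ hM1 hi
    have key : ∀ (x:ℝ) (i:ℕ), i ≤ 4 → (-(|x| * M^4) ≤ x*M^i ∧ x*M^i ≤ |x| * M^4) := by
      intro x i hi
      have h1 : M^i ≤ M^4 := hpow i hi
      have h2 : (0:ℝ) ≤ M^i := pow_nonneg hM0 i
      have h3 := neg_abs_le x
      have h4 := le_abs_self x
      have h5 := abs_nonneg x
      constructor <;> nlinarith
    have hId : M^5 - (|e4|+|e3|+|e2|+|e1|+|e0|)*M^4 - M^4 = 0 := by rw [hM]; ring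
    have hcont : Continuous (fun u : ℝ => u^5 + e4*u^4 + e3*u^3 + e2*u^2 + e1*u + e0) := by
      fun_prop
    obtain ⟨b4, c4⟩ := key e4 4 (by norm_num)
    obtain ⟨b3, -⟩ := key e3 3 (by norm_num)
    obtain ⟨b2, c2⟩ := key e2 2 (by norm_num)
    obtain ⟨b1, -⟩ := key e1 1 (by norm_num)
    obtain ⟨b0, c0⟩ := key e0 0 (by norm_num)
    obtain ⟨-, c3⟩ := key (-e3) 3 (by norm_num)
    obtain ⟨-, c1⟩ := key (-e1) 1 (by norm_num)
    have hpow04 : M^0 ≤ M^4 := hpow 0 (by norm_num)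
    have hgM : 0 < M^5 + e4*M^4 + e3*M^3 + e2*M^2 + e1*M + e0 := by
      have hb1 : -(|e1| * M^4) ≤ e1*M := by nlinarith [b1]
      have hb0 : -(|e0| * M^4) ≤ e0 := by nlinarith [b0]
      nlinarith [b4, b3, b2, hb1, hb0, hId, hpow04]
    have hgm : (-M)^5 + e4*(-M)^4 + e3*(-M)^3 + e2*(-M)^2 + e1*(-M) + e0 < 0 := by
      have hexp : (-M)^5 + e4*(-M)^4 + e3*(-M)^3 + e2*(-M)^2 + e1*(-M) + e0
          = -M^5 + e4*M^4 + (-e3)*M^3 + e2*M^2 + (-e1)*M + e0 := by ring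
      rw [hexp]
      have hc1 : (-e1)*M ≤ |e1| * M^4 := by nlinarith [c1, abs_neg e1]
      have hc0 : e0 ≤ |e0| * M^4 := by nlinarith [c0]
      have hc3 : (-e3)*M^3 ≤ |e3| * M^4 := by nlinarith [c3, abs_neg e3]
      nlinarith [c4, hc3, c2, hc1, hc0, hId, hpow04]
    obtain ⟨t0, _, ht0⟩ := intermediate_value_Icc (by linarith : -M ≤ M)
      hcont.continuousOn ⟨hgm.le, hgM.le⟩
    have hg0 : t0^5 + e4*t0^4 + e3*t0^3 + e2*t0^2 + e1*t0 + e0 = 0 := ht0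
    have hN : r*B*t0^5 + (s*A - 2*q*B)*t0^4 + (p*B - 2*r*A + r*B)*t0^3
        + (q*A - 2*q*B + s*A)*t0^2 + (p*B - 2*r*A)*t0 + q*A = 0 := by
      rw [he4, he3, he2, he1, he0] at hg0
      field_simp at hg0
      linear_combination hg0
    have hAt : 0 < A + t0^2*B := by positivity
    have hAtne : A + t0^2*B ≠ 0 := ne_of_gt hAt
    obtain ⟨l, hldef⟩ : ∃ x:ℝ, x = t0*(A-B)/(A + t0^2*B) := ⟨_, rfl⟩
    have hl : l*(A + t0^2*B) = t0*(A-B) := by rw [hldef]; field_simp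
    have hq5 : ((t0-l)*p + (1 - 2*t0^2 + 3*l*t0)*q + (t0^3 - 2*t0 - 3*l*t0^2)*r
        + (t0^2 + l*t0^3)*s) * (A + t0^2*B) = 0 := by
      linear_combination (-(p - 3*t0*q + 3*t0^2*r - t0^3*s))*hl + hN
    have hq0 : (t0-l)*p + (1 - 2*t0^2 + 3*l*t0)*q + (t0^3 - 2*t0 - 3*l*t0^2)*r
        + (t0^2 + l*t0^3)*s = 0 := by
      rcases mul_eq_zero.mp hq5 with h | h
      · exact h
      · exact absurd h hAtne
    have hcross : (t0-l)*A - t0*(1+l*t0)*B = 0 := by linear_combination -hl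
    have hBt : 0 < (t0-l)^2*A + (1+l*t0)^2*B := by
      rcases eq_or_ne (t0-l) 0 with hx | hx
      · have hy : (1+l*t0) ≠ 0 := by
          intro hy
          have : l = t0 := by linarith [sub_eq_zero.mp hx]
          rw [this] at hy; nlinarith [sq_nonneg t0]
        have h2 : 0 < (1+l*t0)^2*B := by positivity
        nlinarith [sq_nonneg (t0-l)]
      · have h2 : 0 < (t0-l)^2*A := by positivity
        nlinarith [sq_nonneg (1+l*t0)]
    obtain ⟨pt, ρ, hrep⟩ := core' (A + t0^2*B) ((t0-l)^2*A + (1+l*t0)^2*B)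
      (p - 3*t0*q + 3*t0^2*r - t0^3*s)
      ((t0-l)^2*p + (2*(t0-l)*(1+l*t0) - t0*(t0-l)^2)*q
        + ((1+l*t0)^2 - 2*t0*(t0-l)*(1+l*t0))*r + (-(t0*(1+l*t0)^2))*s)
      ((t0-l)^3*p + 3*(t0-l)^2*(1+l*t0)*q + 3*(t0-l)*(1+l*t0)^2*r + (1+l*t0)^3*s)
      hAt hBt
    have h1t : (1:ℝ) + t0^2 ≠ 0 := by positivity
    refine ⟨_, _, transfer 1 0 0 (A + t0^2*B) 0 ((t0-l)^2*A + (1+l*t0)^2*B)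
      (p - 3*t0*q + 3*t0^2*r - t0^3*s) 0
      ((t0-l)^2*p + (2*(t0-l)*(1+l*t0) - t0*(t0-l)^2)*q
        + ((1+l*t0)^2 - 2*t0*(t0-l)*(1+l*t0))*r + (-(t0*(1+l*t0)^2))*s)
      ((t0-l)^3*p + 3*(t0-l)^2*(1+l*t0)*q + 3*(t0-l)*(1+l*t0)^2*r + (1+l*t0)^3*s)
      1 0 0 A 0 B p q r s
      ((1+t0*l)/(1+t0^2)) (t0/(1+t0^2)) 0 ((l-t0)/(1+t0^2)) (1/(1+t0^2)) 0 1
      pt ρ hrep one_pos ?_ (by norm_num) (by ring) (by ring) ?_ ?_ ?_ ?_ ?_ ?_ ?_⟩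
    · -- det
      have heq : ((1+t0*l)/(1+t0^2))*(1/(1+t0^2)) - (t0/(1+t0^2))*((l-t0)/(1+t0^2))
          = 1/(1+t0^2) := by field_simp; ring
      rw [heq]
      positivity
    · -- H20
      have hfull : A = ((1+t0*l)/(1+t0^2))^2*(A + t0^2*B)
          + 2*((1+t0*l)/(1+t0^2))*(t0/(1+t0^2))*((t0-l)*A - t0*(1+l*t0)*B)
          + (t0/(1+t0^2))^2*((t0-l)^2*A + (1+l*t0)^2*B) := by
        field_simp; ring
      linear_combination hfull + 2*((1+t0*l)/(1+t0^2))*(t0/(1+t0^2))*hcross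
    · -- H11
      have hfull : (0:ℝ) = ((1+t0*l)/(1+t0^2))*((l-t0)/(1+t0^2))*(A + t0^2*B)
          + (((1+t0*l)/(1+t0^2))*(1/(1+t0^2)) + (t0/(1+t0^2))*((l-t0)/(1+t0^2)))*((t0-l)*A - t0*(1+l*t0)*B)
          + (t0/(1+t0^2))*(1/(1+t0^2))*((t0-l)^2*A + (1+l*t0)^2*B) := by
        field_simp; ring
      linear_combination hfull + (((1+t0*l)/(1+t0^2))*(1/(1+t0^2)) + (t0/(1+t0^2))*((l-t0)/(1+t0^2)))*hcross
    · -- H02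
      have hfull : B = ((l-t0)/(1+t0^2))^2*(A + t0^2*B)
          + 2*((l-t0)/(1+t0^2))*(1/(1+t0^2))*((t0-l)*A - t0*(1+l*t0)*B)
          + (1/(1+t0^2))^2*((t0-l)^2*A + (1+l*t0)^2*B) := by
        field_simp; ring
      linear_combination hfull + 2*((l-t0)/(1+t0^2))*(1/(1+t0^2))*hcross
    · -- H30
      have hfull : p = ((1+t0*l)/(1+t0^2))^3*(p - 3*t0*q + 3*t0^2*r - t0^3*s)
          + 3*((1+t0*l)/(1+t0^2))^2*(t0/(1+t0^2))*((t0-l)*p + (1 - 2*t0^2 + 3*l*t0)*q + (t0^3 - 2*t0 - 3*l*t0^2)*r + (t0^2 + l*t0^3)*s)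
          + 3*((1+t0*l)/(1+t0^2))*(t0/(1+t0^2))^2*((t0-l)^2*p + (2*(t0-l)*(1+l*t0) - t0*(t0-l)^2)*q + ((1+l*t0)^2 - 2*t0*(t0-l)*(1+l*t0))*r + (-(t0*(1+l*t0)^2))*s)
          + (t0/(1+t0^2))^3*((t0-l)^3*p + 3*(t0-l)^2*(1+l*t0)*q + 3*(t0-l)*(1+l*t0)^2*r + (1+l*t0)^3*s) := by
        field_simp; ring
      linear_combination hfull + 3*((1+t0*l)/(1+t0^2))^2*(t0/(1+t0^2))*hq0
    · -- H21
      have hfull : q = ((1+t0*l)/(1+t0^2))^2*((l-t0)/(1+t0^2))*(p - 3*t0*q + 3*t0^2*r - t0^3*s)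
          + (((1+t0*l)/(1+t0^2))^2*(1/(1+t0^2)) + 2*((1+t0*l)/(1+t0^2))*(t0/(1+t0^2))*((l-t0)/(1+t0^2)))*((t0-l)*p + (1 - 2*t0^2 + 3*l*t0)*q + (t0^3 - 2*t0 - 3*l*t0^2)*r + (t0^2 + l*t0^3)*s)
          + (2*((1+t0*l)/(1+t0^2))*(t0/(1+t0^2))*(1/(1+t0^2)) + (t0/(1+t0^2))^2*((l-t0)/(1+t0^2)))*((t0-l)^2*p + (2*(t0-l)*(1+l*t0) - t0*(t0-l)^2)*q + ((1+l*t0)^2 - 2*t0*(t0-l)*(1+l*t0))*r + (-(t0*(1+l*t0)^2))*s)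
          + (t0/(1+t0^2))^2*(1/(1+t0^2))*((t0-l)^3*p + 3*(t0-l)^2*(1+l*t0)*q + 3*(t0-l)*(1+l*t0)^2*r + (1+l*t0)^3*s) := by
        field_simp; ring
      linear_combination hfull + (((1+t0*l)/(1+t0^2))^2*(1/(1+t0^2)) + 2*((1+t0*l)/(1+t0^2))*(t0/(1+t0^2))*((l-t0)/(1+t0^2)))*hq0
    · -- H12
      have hfull : r = ((1+t0*l)/(1+t0^2))*((l-t0)/(1+t0^2))^2*(p - 3*t0*q + 3*t0^2*r - t0^3*s)
          + (2*((1+t0*l)/(1+t0^2))*((l-t0)/(1+t0^2))*(1/(1+t0^2)) + (t0/(1+t0^2))*((l-t0)/(1+t0^2))^2)*((t0-l)*p + (1 - 2*t0^2 + 3*l*t0)*q + (t0^3 - 2*t0 - 3*l*t0^2)*r + (t0^2 + l*t0^3)*s)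
          + (((1+t0*l)/(1+t0^2))*(1/(1+t0^2))^2 + 2*(t0/(1+t0^2))*((l-t0)/(1+t0^2))*(1/(1+t0^2)))*((t0-l)^2*p + (2*(t0-l)*(1+l*t0) - t0*(t0-l)^2)*q + ((1+l*t0)^2 - 2*t0*(t0-l)*(1+l*t0))*r + (-(t0*(1+l*t0)^2))*s)
          + (t0/(1+t0^2))*(1/(1+t0^2))^2*((t0-l)^3*p + 3*(t0-l)^2*(1+l*t0)*q + 3*(t0-l)*(1+l*t0)^2*r + (1+l*t0)^3*s) := by
        field_simp; ring
      linear_combination hfull + (2*((1+t0*l)/(1+t0^2))*((l-t0)/(1+t0^2))*(1/(1+t0^2)) + (t0/(1+t0^2))*((l-t0)/(1+t0^2))^2)*hq0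
    · -- H03
      have hfull : s = ((l-t0)/(1+t0^2))^3*(p - 3*t0*q + 3*t0^2*r - t0^3*s)
          + 3*((l-t0)/(1+t0^2))^2*(1/(1+t0^2))*((t0-l)*p + (1 - 2*t0^2 + 3*l*t0)*q + (t0^3 - 2*t0 - 3*l*t0^2)*r + (t0^2 + l*t0^3)*s)
          + 3*((l-t0)/(1+t0^2))*(1/(1+t0^2))^2*((t0-l)^2*p + (2*(t0-l)*(1+l*t0) - t0*(t0-l)^2)*q + ((1+l*t0)^2 - 2*t0*(t0-l)*(1+l*t0))*r + (-(t0*(1+l*t0)^2))*s)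
          + (1/(1+t0^2))^3*((t0-l)^3*p + 3*(t0-l)^2*(1+l*t0)*q + 3*(t0-l)*(1+l*t0)^2*r + (1+l*t0)^3*s) := by
        field_simp; ring
      linear_combination hfull + 3*((l-t0)/(1+t0^2))^2*(1/(1+t0^2))*hq0

/-- Theorem 3.8: if `M(1) > 0`, `W = M1⁻¹·B2`, `S = WᵀM1W = [[x,a,b],[a,y,t],[b,t,z]]`
and `b ≠ y`, then `β^{(3)}` admits a `4`-atomic representing measure. -/
theorem cubic_posdef_b_ne_y_four_atomic
    (β00 β10 β01 β20 β11 β02 β30 β21 β12 β03 : ℝ) (hβ00 : 0 < β00)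
    (x a b y t z : ℝ)
    (hpd : (M1 β00 β10 β01 β20 β11 β02).PosDef)
    (hS : ((M1 β00 β10 β01 β20 β11 β02)⁻¹ * B2 β20 β11 β02 β30 β21 β12 β03)ᵀ *
            M1 β00 β10 β01 β20 β11 β02 *
            ((M1 β00 β10 β01 β20 β11 β02)⁻¹ * B2 β20 β11 β02 β30 β21 β12 β03) =
          !![x, a, b; a, y, t; b, t, z])
    (hby : b ≠ y) :
    ∃ (pt : Fin 4 → ℝ × ℝ) (ρ : Fin 4 → ℝ),
      IsAtomicRep β00 β10 β01 β20 β11 β02 β30 β21 β12 β03 4 pt ρ := by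
  have hβne : β00 ≠ 0 := ne_of_gt hβ00
  have he20 : 0 < β00*β20 - β10^2 := by
    have hx : (![-β10, β00, 0] : Fin 3 → ℝ) ≠ 0 := by
      intro h
      exact hβne (by simpa using congrFun h 1)
    have hv := hpd.dotProduct_mulVec_pos hx
    simp only [M1, star_trivial, Matrix.mulVec, dotProduct, Fin.sum_univ_three,
      Matrix.cons_val_zero, Matrix.cons_val_one, Matrix.head_cons, Matrix.cons_val_two,
      Matrix.tail_cons, Matrix.of_apply, Matrix.cons_val', Matrix.empty_val',
      Matrix.cons_val_fin_one, Matrix.head_fin_const] at hv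
    nlinarith [hv, hβ00]
  have he20ne : β00*β20 - β10^2 ≠ 0 := ne_of_gt he20
  have hD2 : 0 < (β00*β20 - β10^2)*(β00*β02 - β01^2) - (β00*β11 - β10*β01)^2 := by
    have he20ne' : β00*(β00*β20 - β10^2) ≠ 0 := by positivity
    have hx : (![β10*(β00*β11 - β10*β01) - β01*(β00*β20 - β10^2),
        -(β00*(β00*β11 - β10*β01)), β00*(β00*β20 - β10^2)] : Fin 3 → ℝ) ≠ 0 := by
      intro h
      exact he20ne' (by simpa using congrFun h 2)
    have hv := hpd.dotProduct_mulVec_pos hx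
    simp only [M1, star_trivial, Matrix.mulVec, dotProduct, Fin.sum_univ_three,
      Matrix.cons_val_zero, Matrix.cons_val_one, Matrix.head_cons, Matrix.cons_val_two,
      Matrix.tail_cons, Matrix.of_apply, Matrix.cons_val', Matrix.empty_val',
      Matrix.cons_val_fin_one, Matrix.head_fin_const] at hv
    nlinarith [hv, mul_pos hβ00 he20, hβ00, he20]
  have hA0 : (0:ℝ) < (β20/β00 - (β10/β00)^2) := by
    have hval : (β20/β00 - (β10/β00)^2) = (β00*β20 - β10^2)/β00^2 := by field_simp
    rw [hval]; positivity
  have hB0 : (0:ℝ) < ((β02/β00 - (β01/β00)^2) - 2*((β00*β11 - β10*β01)/(β00*β20 - β10^2))*(β11/β00 - (β10/β00)*(β01/β00)) + ((β00*β11 - β10*β01)/(β00*β20 - β10^2))^2*(β20/β00 - (β10/β00)^2)) := by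
    have hval : ((β02/β00 - (β01/β00)^2) - 2*((β00*β11 - β10*β01)/(β00*β20 - β10^2))*(β11/β00 - (β10/β00)*(β01/β00)) + ((β00*β11 - β10*β01)/(β00*β20 - β10^2))^2*(β20/β00 - (β10/β00)^2)) =
        ((β00*β20 - β10^2)*(β00*β02 - β01^2) - (β00*β11 - β10*β01)^2)
          /(β00^2*(β00*β20 - β10^2)) := by
      field_simp; ring
    rw [hval]; positivity
  obtain ⟨pt, ρ, hrep⟩ := rot' (β20/β00 - (β10/β00)^2) ((β02/β00 - (β01/β00)^2) - 2*((β00*β11 - β10*β01)/(β00*β20 - β10^2))*(β11/β00 - (β10/β00)*(β01/β00)) + ((β00*β11 - β10*β01)/(β00*β20 - β10^2))^2*(β20/β00 - (β10/β00)^2)) ((β30 - 3*(β10/β00)*β20 + 3*(β10/β00)^2*β10 - (β10/β00)^3*β00)/β00) (((β21 - 2*(β10/β00)*β11 - (β01/β00)*β20 + (β10/β00)^2*β01 + 2*(β10/β00)*(β01/β00)*β10 - (β10/β00)^2*(β01/β00)*β00)/β00) - ((β00*β11 - β10*β01)/(β00*β20 - β10^2))*((β30 - 3*(β10/β00)*β20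 + 3*(β10/β00)^2*β10 - (β10/β00)^3*β00)/β00)) (((β12 - 2*(β01/β00)*β11 - (β10/β00)*β02 + (β01/β00)^2*β10 + 2*(β10/β00)*(β01/β00)*β01 - (β10/β00)*(β01/β00)^2*β00)/β00) - 2*((β00*β11 - β10*β01)/(β00*β20 - β10^2))*((β21 - 2*(β10/β00)*β11 - (β01/β00)*β20 + (β10/β00)^2*β01 + 2*(β10/β00)*(β01/β00)*β10 - (β10/β00)^2*(β01/β00)*β00)/β00) + ((β00*β11 - β10*β01)/(β00*β20 - β10^2))^2*((β30 - 3*(β10/β00)*β20 + 3*(β10/β00)^2*β10 - (β10/β00)^3*β00)/β00)) (((β03 - 3*(β01/β00)*β02 + 3*(β01/β00)^2*β01 - (β01/β00)^3*β00)/β00) - 3*((β00*β11 - β10*β01)/(β00*β20 - β10^2))*((β12 - 2*(β01/β00)*β11 - (β10/β00)*β02 + (β01/β00)^2*β10 + 2*(β10/β00)*(β01/β00)*β01 - (β10/β00)*(β01/β00)^2*β00)/β00) + 3*((β00*β11 - β10*β01)/(β00*β20 - β10^2))^2*((β21 - 2*(β10/β00)*β11 - (β01/β00)*β20 + (β10/β00)^2*β01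 + 2*(β10/β00)*(β01/β00)*β10 - (β10/β00)^2*(β01/β00)*β00)/β00) - ((β00*β11 - β10*β01)/(β00*β20 - β10^2))^3*((β30 - 3*(β10/β00)*β20 + 3*(β10/β00)^2*β10 - (β10/β00)^3*β00)/β00)) hA0 hB0
  exact ⟨_, _, transfer 1 0 0 (β20/β00 - (β10/β00)^2) 0 ((β02/β00 - (β01/β00)^2) - 2*((β00*β11 - β10*β01)/(β00*β20 - β10^2))*(β11/β00 - (β10/β00)*(β01/β00)) + ((β00*β11 - β10*β01)/(β00*β20 - β10^2))^2*(β20/β00 - (β10/β00)^2)) ((β30 - 3*(β10/β00)*β20 + 3*(β10/β00)^2*β10 - (β10/β00)^3*β00)/β00) (((β21 - 2*(β10/β00)*β11 - (β01/β00)*β20 + (β10/β00)^2*β01 + 2*(β10/β00)*(β01/β00)*β10 - (β10/β00)^2*(β01/β00)*β00)/β00) - ((β00*β11 - β10*β01)/(β00*β20 - β10^2))*((β30 - 3*(β10/β00)*β20 + 3*(β10/β00)^2*β10 - (β10/β00)^3*β00)/β00)) (((β12 - 2*(β01/β00)*β11 - (β10/β00)*β02 + (β01/β00)^2*β10 + 2*(β10/β00)*(β01/β00)*β01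 - (β10/β00)*(β01/β00)^2*β00)/β00) - 2*((β00*β11 - β10*β01)/(β00*β20 - β10^2))*((β21 - 2*(β10/β00)*β11 - (β01/β00)*β20 + (β10/β00)^2*β01 + 2*(β10/β00)*(β01/β00)*β10 - (β10/β00)^2*(β01/β00)*β00)/β00) + ((β00*β11 - β10*β01)/(β00*β20 - β10^2))^2*((β30 - 3*(β10/β00)*β20 + 3*(β10/β00)^2*β10 - (β10/β00)^3*β00)/β00)) (((β03 - 3*(β01/β00)*β02 + 3*(β01/β00)^2*β01 - (β01/β00)^3*β00)/β00) - 3*((β00*β11 - β10*β01)/(β00*β20 - β10^2))*((β12 - 2*(β01/β00)*β11 - (β10/β00)*β02 + (β01/β00)^2*β10 + 2*(β10/β00)*(β01/β00)*β01 - (β10/β00)*(β01/β00)^2*β00)/β00) + 3*((β00*β11 - β10*β01)/(β00*β20 - β10^2))^2*((β21 - 2*(β10/β00)*β11 - (β01/β00)*β20 + (β10/β00)^2*β01 + 2*(β10/β00)*(β01/β00)*β10 - (β10/β00)^2*(β01/β00)*β00)/β00) - ((β00*β11 - β10*β01)/(β00*β20 - β10^2))^3*((β30 - 3*(β10/β00)*β20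 + 3*(β10/β00)^2*β10 - (β10/β00)^3*β00)/β00))
    β00 β10 β01 β20 β11 β02 β30 β21 β12 β03
    1 0 (β10/β00) ((β00*β11 - β10*β01)/(β00*β20 - β10^2)) 1 (β01/β00) β00 pt ρ hrep hβ00 (by norm_num)
    (by field_simp) (by field_simp; ring) (by field_simp; ring)
    (by field_simp; ring) (by field_simp; ring) (by field_simp; ring)
    (by field_simp; ring) (by field_simp; ring) (by field_simp; ring)
    (by field_simp; ring)⟩
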